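/- Let n ≥ 2, let ξ ∈ ℝⁿ be a nonzero vector, and let W : Sⁿ⁻¹ → ℝ be a continuous strictly positive function. Suppose f is a symmetric n×n real matrix and α ∈ ℝⁿ satisfy ∫_{Sⁿ⁻¹ ∩ ξ^⊥} |⟨f ω, ω⟩ + ⟨α, ω⟩|² W(ω) dσ(ω) = 0, where dσ is the surface measure on the (n−2)-sphere Sⁿ⁻¹ ∩ ξ^⊥, together with f ξ = 0 and ⟨α, ξ⟩ = 0. Then f = 0 and α = 0. -/

import Mathlib

open MeasureTheory InnerProductSpace Matrix

section AuxGMT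
open Metric Set NNReal ENNReal

private lemma aux_hpi (k : ℕ) :
    (MeasureTheory.Measure.hausdorffMeasure k : Measure (Fin k → ℝ)) = volume := by
  simpa using MeasureTheory.hausdorffMeasure_pi_real (ι := Fin k)

private lemma aux_A1 (k : ℕ) (c : EuclideanSpace ℝ (Fin k)) (δ : ℝ) (hδ : 0 < δ) :
    0 < Measure.hausdorffMeasure k (Metric.ball c δ) := by
  set e := WithLp.equiv 2 (Fin k → ℝ)
  have hL : LipschitzWith 1 e := PiLp.lipschitzWith_ofLp 2 _
  have hA : AntilipschitzWith ((Fintype.card (Fin k) : ℝ≥0) ^ ((1:ℝ≥0∞)/2).toReal) e :=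
    PiLp.antilipschitzWith_ofLp 2 _
  have him := hL.hausdorffMeasure_image_le (d := k) (Nat.cast_nonneg k) (Metric.ball c δ)
  simp only [ENNReal.coe_one, ENNReal.one_rpow, one_mul] at him
  set K : ℝ≥0 := (Fintype.card (Fin k) : ℝ≥0) ^ ((1:ℝ≥0∞)/2).toReal
  set r : ℝ := δ / (1 + k)
  have hr : 0 < r := by positivity
  have hKr : (K : ℝ) * r < δ := by
    have h1 : (K : ℝ) = (k : ℝ) ^ ((1:ℝ)/2) := by simp [K, NNReal.coe_rpow]
    have h2 : (k : ℝ) ^ ((1:ℝ)/2) < 1 + k := by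
      rw [← Real.sqrt_eq_rpow]
      nlinarith [Real.sq_sqrt (Nat.cast_nonneg (α := ℝ) k), Real.sqrt_nonneg (k:ℝ)]
    calc (K:ℝ) * r < (1 + k) * r := by nlinarith
      _ = δ := by show (1 + (k:ℝ)) * (δ / (1 + k)) = δ; field_simp
  have hsub : Metric.ball (e c) r ⊆ e '' Metric.ball c δ := by
    intro x hx
    refine ⟨e.symm x, ?_, by simp [e]⟩
    have h1 : dist (e.symm x) (e.symm (e c)) ≤ K * dist x (e c) := hA.le_mul_dist _ _
    simp only [Equiv.symm_apply_apply] at h1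
    have hx' : dist x (e c) < r := hx
    calc dist (e.symm x) c ≤ K * dist x (e c) := h1
      _ ≤ K * r := by nlinarith [NNReal.coe_nonneg K]
      _ < δ := hKr
  have hpos : 0 < Measure.hausdorffMeasure (k:ℝ) (Metric.ball (e c) r) := by
    rw [show ((k:ℝ)) = ((k:ℕ):ℝ) by norm_num, aux_hpi k]
    exact measure_ball_pos _ _ hr
  exact lt_of_lt_of_le (lt_of_lt_of_le hpos (measure_mono hsub)) him

private lemma aux_A2 (k : ℕ) (A : Set (EuclideanSpace ℝ (Fin k))) (R : ℝ)
    (hA : A ⊆ Metric.closedBall 0 R) :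
    Measure.hausdorffMeasure k A < ⊤ := by
  set e := WithLp.equiv 2 (Fin k → ℝ)
  have hL : LipschitzWith 1 e := PiLp.lipschitzWith_ofLp 2 _
  have hAnti : AntilipschitzWith ((Fintype.card (Fin k) : ℝ≥0) ^ ((1:ℝ≥0∞)/2).toReal) e :=
    PiLp.antilipschitzWith_ofLp 2 _
  have h1 := hAnti.le_hausdorffMeasure_image (d := k) (Nat.cast_nonneg k) A
  have h2 : e '' A ⊆ Metric.closedBall (e 0) R := by
    rintro x ⟨y, hy, rfl⟩
    have := hL.dist_le_mul y 0
    simp only [ENNReal.coe_one, NNReal.coe_one, one_mul] at this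
    exact le_trans this (hA hy)
  have h3 : Measure.hausdorffMeasure (k:ℝ) (e '' A) < ⊤ := by
    rw [show ((k:ℝ)) = ((k:ℕ):ℝ) by norm_num, aux_hpi k]
    exact lt_of_le_of_lt (measure_mono h2) measure_closedBall_lt_top
  exact lt_of_le_of_lt h1 (ENNReal.mul_lt_top
    (ENNReal.rpow_ne_top_of_nonneg (Nat.cast_nonneg k) ENNReal.coe_ne_top).lt_top h3)

private lemma aux_normsq (m : ℕ) (x : EuclideanSpace ℝ (Fin m)) : ‖x‖^2 = ∑ i, (x i)^2 := by
  rw [EuclideanSpace.norm_eq, Real.sq_sqrt (by positivity)]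
  simp [sq_abs]

private lemma aux_coordsq_le (m : ℕ) (x : EuclideanSpace ℝ (Fin m)) (i : Fin m) :
    (x i)^2 ≤ ‖x‖^2 := by
  rw [aux_normsq]
  exact Finset.single_le_sum (fun j _ => sq_nonneg (x j)) (Finset.mem_univ i)

private lemma aux_le_of_sq_le (a b : ℝ) (ha : 0 ≤ a) (hb : 0 ≤ b) (h : a^2 ≤ b^2) : a ≤ b := by
  nlinarith

private lemma aux_lt_of_sq_lt (a b : ℝ) (ha : 0 ≤ a) (hb : 0 ≤ b) (h : a^2 < b^2) : a < b := by
  nlinarith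

noncomputable def projE (k : ℕ) (x : EuclideanSpace ℝ (Fin (k+1))) : EuclideanSpace ℝ (Fin k) :=
  (WithLp.equiv 2 (Fin k → ℝ)).symm (fun i => x (Fin.castSucc i))

noncomputable def graphE (k : ℕ) (w : EuclideanSpace ℝ (Fin k)) : EuclideanSpace ℝ (Fin (k+1)) :=
  (WithLp.equiv 2 (Fin (k+1) → ℝ)).symm
    (Fin.snoc (WithLp.equiv 2 (Fin k → ℝ) w) (Real.sqrt (1 - ‖w‖^2)))

@[simp] private lemma projE_apply (k : ℕ) (x : EuclideanSpace ℝ (Fin (k+1))) (i : Fin k) :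
    projE k x i = x (Fin.castSucc i) := rfl

@[simp] private lemma graphE_castSucc (k : ℕ) (w : EuclideanSpace ℝ (Fin k)) (i : Fin k) :
    graphE k w (Fin.castSucc i) = w i := by
  simp [graphE, WithLp.equiv_symm_apply, WithLp.equiv_apply, Fin.snoc_castSucc]

@[simp] private lemma graphE_last (k : ℕ) (w : EuclideanSpace ℝ (Fin k)) :
    graphE k w (Fin.last k) = Real.sqrt (1 - ‖w‖^2) := by
  simp [graphE, WithLp.equiv_symm_apply, Fin.snoc_last]

private lemma aux_normsq_split (k : ℕ) (x : EuclideanSpace ℝ (Fin (k+1))) :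
    ‖x‖^2 = ‖projE k x‖^2 + (x (Fin.last k))^2 := by
  rw [aux_normsq, aux_normsq, Fin.sum_univ_castSucc]
  simp

private lemma projE_sub (k : ℕ) (x y : EuclideanSpace ℝ (Fin (k+1))) :
    projE k (x - y) = projE k x - projE k y := by
  ext i; simp [projE_apply]

private lemma projE_lipschitz (k : ℕ) : LipschitzWith 1 (projE k) := by
  refine LipschitzWith.of_dist_le_mul (fun x y => ?_)
  simp only [NNReal.coe_one, one_mul, dist_eq_norm, ← projE_sub]
  refine aux_le_of_sq_le _ _ (norm_nonneg _) (norm_nonneg _) ?_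
  rw [aux_normsq_split k (x - y)]
  nlinarith [sq_nonneg ((x-y) (Fin.last k))]

noncomputable def npole (k : ℕ) : EuclideanSpace ℝ (Fin (k+1)) :=
  EuclideanSpace.single (Fin.last k) 1

private lemma projE_graphE (k : ℕ) (w : EuclideanSpace ℝ (Fin k)) : projE k (graphE k w) = w := by
  ext i; simp

private lemma graphE_mem_sphere (k : ℕ) (w : EuclideanSpace ℝ (Fin k)) (hw : ‖w‖ ≤ 1) :
    ‖graphE k w‖ = 1 := by
  have h2 : ‖graphE k w‖^2 = 1 := by
    rw [aux_normsq_split, projE_graphE, graphE_last,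
      Real.sq_sqrt (by nlinarith [norm_nonneg w])]
    ring
  calc ‖graphE k w‖ = Real.sqrt (‖graphE k w‖^2) := (Real.sqrt_sq (norm_nonneg _)).symm
    _ = 1 := by rw [h2, Real.sqrt_one]

private lemma dist_graphE_npole (k : ℕ) (w : EuclideanSpace ℝ (Fin k)) (hw : ‖w‖ ≤ 1/2) :
    dist (graphE k w) (npole k) ^ 2 ≤ 2 * ‖w‖^2 := by
  have hw0 := norm_nonneg w
  have hsq : ‖w‖^2 ≤ 1 := by nlinarith
  rw [dist_eq_norm, aux_normsq_split, projE_sub, projE_graphE]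
  have hlast : (graphE k w - npole k) (Fin.last k) = Real.sqrt (1 - ‖w‖^2) - 1 := by
    have : (graphE k w - npole k) (Fin.last k)
        = graphE k w (Fin.last k) - npole k (Fin.last k) := rfl
    rw [this, graphE_last]
    simp [npole, EuclideanSpace.single_apply]
  have hproj : projE k (npole k) = 0 := by
    ext i
    simp [npole, EuclideanSpace.single_apply, (Fin.castSucc_lt_last i).ne]
  rw [hlast, hproj, sub_zero]
  have hs : Real.sqrt (1 - ‖w‖^2) ≥ 1 - ‖w‖^2 := by
    nlinarith [Real.sq_sqrt (by nlinarith : (0:ℝ) ≤ 1 - ‖w‖^2),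
      Real.sqrt_nonneg (1 - ‖w‖^2), Real.sqrt_le_sqrt (by nlinarith : 1 - ‖w‖^2 ≤ 1),
      Real.sqrt_one]
  have hs1 : Real.sqrt (1 - ‖w‖^2) ≤ 1 := by
    nlinarith [Real.sqrt_le_sqrt (by nlinarith : 1 - ‖w‖^2 ≤ 1), Real.sqrt_one]
  nlinarith [sq_nonneg (Real.sqrt (1 - ‖w‖^2) - 1)]

private lemma aux_B2' (k : ℕ) (ε : ℝ) (hε : 0 < ε) :
    0 < Measure.hausdorffMeasure (k:ℝ)
      (sphere (0 : EuclideanSpace ℝ (Fin (k+1))) 1 ∩ ball (npole k) ε) := by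
  set δ := min (ε/2) (1/2) with hδdef
  have hδ : 0 < δ := by positivity
  have hδ2 : δ ≤ 1/2 := min_le_right _ _
  have hδε : δ ≤ ε/2 := min_le_left _ _
  have hsub : ball (0 : EuclideanSpace ℝ (Fin k)) δ ⊆
      projE k '' (sphere (0 : EuclideanSpace ℝ (Fin (k+1))) 1 ∩ ball (npole k) ε) := by
    intro w hw
    have hwnorm : ‖w‖ < δ := by simpa [mem_ball, dist_zero_right] using hw
    have hw1 : ‖w‖ ≤ 1/2 := le_trans hwnorm.le hδ2
    refine ⟨graphE k w, ⟨?_, ?_⟩, projE_graphE k w⟩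
    · simpa [mem_sphere_iff_norm, sub_zero] using graphE_mem_sphere k w (by linarith)
    · rw [mem_ball]
      refine aux_lt_of_sq_lt _ _ dist_nonneg hε.le ?_
      have := dist_graphE_npole k w hw1
      nlinarith [norm_nonneg w]
  have him := (projE_lipschitz k).hausdorffMeasure_image_le (d := k) (Nat.cast_nonneg k)
    (sphere (0 : EuclideanSpace ℝ (Fin (k+1))) 1 ∩ ball (npole k) ε)
  simp only [ENNReal.coe_one, ENNReal.one_rpow, one_mul] at him
  exact lt_of_lt_of_le (lt_of_lt_of_le (aux_A1 k 0 δ hδ) (measure_mono hsub)) him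

private lemma sqrt_diff_sq_le (a b : ℝ) (ha : 1/4 ≤ a) (hb : 1/4 ≤ b) :
    (Real.sqrt a - Real.sqrt b)^2 ≤ (a - b)^2 := by
  have ha' : (0:ℝ) ≤ a := by linarith
  have hb' : (0:ℝ) ≤ b := by linarith
  have hu : (1:ℝ)/2 ≤ Real.sqrt a := by
    rw [show (1:ℝ)/2 = Real.sqrt (1/4) by
      rw [show (1:ℝ)/4 = (1/2)^2 by norm_num, Real.sqrt_sq]; norm_num]
    exact Real.sqrt_le_sqrt ha
  have hv : (1:ℝ)/2 ≤ Real.sqrt b := by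
    rw [show (1:ℝ)/2 = Real.sqrt (1/4) by
      rw [show (1:ℝ)/4 = (1/2)^2 by norm_num, Real.sqrt_sq]; norm_num]
    exact Real.sqrt_le_sqrt hb
  have ha2 := Real.sq_sqrt ha'
  have hb2 := Real.sq_sqrt hb'
  have hge : (0:ℝ) ≤ (Real.sqrt a + Real.sqrt b)^2 - 1 := by nlinarith
  nlinarith [mul_nonneg (sq_nonneg (Real.sqrt a - Real.sqrt b)) hge]

private lemma graphE_lipschitzOn (k : ℕ) :
    LipschitzOnWith 3 (graphE k) {w : EuclideanSpace ℝ (Fin k) | ‖w‖^2 ≤ 3/4} := by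
  rw [lipschitzOnWith_iff_dist_le_mul]
  intro w hw w' hw'
  simp only [mem_setOf_eq] at hw hw'
  have hw0 := norm_nonneg w; have hw0' := norm_nonneg w'
  have hwle : ‖w‖ ≤ 1 := by nlinarith
  have hwle' : ‖w'‖ ≤ 1 := by nlinarith
  rw [dist_eq_norm, dist_eq_norm]
  refine aux_le_of_sq_le _ _ (norm_nonneg _) (by positivity) ?_
  rw [aux_normsq_split, projE_sub]
  have hproj : projE k (graphE k w) - projE k (graphE k w') = w - w' := by
    ext i
    simp [projE_apply]
  have hlast : (graphE k w - graphE k w') (Fin.last k)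
      = Real.sqrt (1 - ‖w‖^2) - Real.sqrt (1 - ‖w'‖^2) := by
    have : (graphE k w - graphE k w') (Fin.last k)
        = graphE k w (Fin.last k) - graphE k w' (Fin.last k) := rfl
    rw [this, graphE_last, graphE_last]
  rw [hproj, hlast]
  have hsq := sqrt_diff_sq_le (1 - ‖w‖^2) (1 - ‖w'‖^2) (by nlinarith) (by nlinarith)
  have hnn : |‖w‖ - ‖w'‖| ≤ ‖w - w'‖ := abs_norm_sub_norm_le w w'
  have h2 : (‖w‖ - ‖w'‖)^2 ≤ ‖w - w'‖^2 := by
    nlinarith [abs_nonneg (‖w‖ - ‖w'‖), sq_abs (‖w‖ - ‖w'‖), norm_nonneg (w - w')]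
  have h3 : ((1 - ‖w‖^2) - (1 - ‖w'‖^2))^2 ≤ 4 * ‖w - w'‖^2 := by
    nlinarith [sq_nonneg (‖w‖ + ‖w'‖), sq_nonneg (‖w‖ - ‖w'‖), norm_nonneg (w-w')]
  have hc3 : ((3:ℝ≥0):ℝ) = 3 := by norm_num
  rw [hc3, mul_pow]
  nlinarith [norm_nonneg (w - w')]

private lemma aux_B1' (k : ℕ) :
    Measure.hausdorffMeasure (k:ℝ)
      (sphere (0 : EuclideanSpace ℝ (Fin (k+1))) 1 ∩ closedBall (npole k) (1/2)) < ⊤ := by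
  set T := {w : EuclideanSpace ℝ (Fin k) | ‖w‖^2 ≤ 3/4}
  have hsub : sphere (0 : EuclideanSpace ℝ (Fin (k+1))) 1 ∩ closedBall (npole k) (1/2)
      ⊆ graphE k '' T := by
    rintro x ⟨hx1, hx2⟩
    rw [mem_sphere_iff_norm, sub_zero] at hx1
    rw [mem_closedBall, dist_eq_norm] at hx2
    set t := x (Fin.last k) with ht
    have hlastco : (x - npole k) (Fin.last k) = t - 1 := by
      have : (x - npole k) (Fin.last k) = x (Fin.last k) - npole k (Fin.last k) := rfl
      rw [this]; simp [npole, EuclideanSpace.single_apply, ht]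
    have htb : (t - 1)^2 ≤ (1/2)^2 := by
      calc (t-1)^2 = ((x - npole k) (Fin.last k))^2 := by rw [hlastco]
        _ ≤ ‖x - npole k‖^2 := aux_coordsq_le _ _ _
        _ ≤ (1/2)^2 := by nlinarith [norm_nonneg (x - npole k)]
    have htpos : 1/2 ≤ t := by nlinarith
    set w := projE k x with hwdef
    have hsplit := aux_normsq_split k x
    rw [hx1] at hsplit
    have hwT : w ∈ T := by
      simp only [T, mem_setOf_eq]
      nlinarith
    have hxw : x = graphE k w := by
      have hlastval : graphE k w (Fin.last k) = t := by
        rw [graphE_last]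
        have h1 : 1 - ‖w‖^2 = t^2 := by nlinarith
        rw [h1, Real.sqrt_sq (by linarith)]
      ext j
      refine Fin.lastCases ?_ (fun i => ?_) j
      · rw [hlastval]
      · rw [graphE_castSucc]
        simp [hwdef, projE_apply]
    exact ⟨w, hwT, hxw.symm⟩
  have him := (graphE_lipschitzOn k).hausdorffMeasure_image_le (d := k) (Nat.cast_nonneg k)
  have hT : T ⊆ closedBall (0:EuclideanSpace ℝ (Fin k)) 1 := by
    intro w hw
    simp only [T, mem_setOf_eq] at hw
    rw [mem_closedBall, dist_zero_right]
    nlinarith [norm_nonneg w]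
  calc Measure.hausdorffMeasure (k:ℝ) _
      ≤ Measure.hausdorffMeasure (k:ℝ) (graphE k '' T) := measure_mono hsub
    _ ≤ ((3:ℝ≥0):ℝ≥0∞)^(k:ℝ) * Measure.hausdorffMeasure (k:ℝ) T := him
    _ < ⊤ := ENNReal.mul_lt_top
        (ENNReal.rpow_ne_top_of_nonneg (Nat.cast_nonneg k) ENNReal.coe_ne_top).lt_top
        (aux_A2 k T 1 hT)

private lemma exists_rot (k : ℕ) (p : EuclideanSpace ℝ (Fin (k+1))) (hp : ‖p‖ = 1) :
    ∃ ψ : EuclideanSpace ℝ (Fin (k+1)) ≃ₗᵢ[ℝ] EuclideanSpace ℝ (Fin (k+1)), ψ p = npole k := by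
  have hcard : Module.finrank ℝ (EuclideanSpace ℝ (Fin (k+1))) = Fintype.card (Fin (k+1)) := by
    simp [finrank_euclideanSpace_fin]
  have horth : Orthonormal ℝ (({Fin.last k} : Set (Fin (k+1))).restrict (fun _ => p)) := by
    constructor
    · intro i; exact hp
    · intro i j hij
      exact absurd (Subtype.ext (i.2.trans j.2.symm)) hij
  obtain ⟨b, hb⟩ := horth.exists_orthonormalBasis_extension_of_card_eq hcard
  refine ⟨b.repr, ?_⟩
  have := hb (Fin.last k) rfl
  rw [← this, b.repr_self]
  rfl

private lemma aux_B2 (k : ℕ) (p : EuclideanSpace ℝ (Fin (k+1))) (hp : ‖p‖ = 1)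
    (ε : ℝ) (hε : 0 < ε) :
    0 < Measure.hausdorffMeasure (k:ℝ)
      (sphere (0 : EuclideanSpace ℝ (Fin (k+1))) 1 ∩ ball p ε) := by
  obtain ⟨ψ, hψ⟩ := exists_rot k p hp
  have hset : sphere (0 : EuclideanSpace ℝ (Fin (k+1))) 1 ∩ ball p ε
      = ψ.toIsometryEquiv ⁻¹' (sphere 0 1 ∩ ball (npole k) ε) := by
    ext x
    simp only [mem_inter_iff, mem_preimage, mem_sphere_iff_norm, sub_zero, mem_ball,
      LinearIsometryEquiv.coe_toIsometryEquiv]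
    rw [ψ.norm_map, ← hψ, ψ.dist_map]
  rw [hset, IsometryEquiv.hausdorffMeasure_preimage]
  exact aux_B2' k ε hε

private lemma aux_B1 (k : ℕ) (p : EuclideanSpace ℝ (Fin (k+1))) (hp : ‖p‖ = 1) :
    Measure.hausdorffMeasure (k:ℝ)
      (sphere (0 : EuclideanSpace ℝ (Fin (k+1))) 1 ∩ closedBall p (1/2)) < ⊤ := by
  obtain ⟨ψ, hψ⟩ := exists_rot k p hp
  have hset : sphere (0 : EuclideanSpace ℝ (Fin (k+1))) 1 ∩ closedBall p (1/2)
      = ψ.toIsometryEquiv ⁻¹' (sphere 0 1 ∩ closedBall (npole k) (1/2)) := by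
    ext x
    simp only [mem_inter_iff, mem_preimage, mem_sphere_iff_norm, sub_zero, mem_closedBall,
      LinearIsometryEquiv.coe_toIsometryEquiv]
    rw [ψ.norm_map, ← hψ, ψ.dist_map]
  rw [hset, IsometryEquiv.hausdorffMeasure_preimage]
  exact aux_B1' k

private lemma aux_C (k : ℕ) :
    Measure.hausdorffMeasure (k:ℝ) (sphere (0 : EuclideanSpace ℝ (Fin (k+1))) 1) < ⊤ := by
  obtain ⟨t, hts, hcov⟩ :=
    (isCompact_sphere (0 : EuclideanSpace ℝ (Fin (k+1))) 1).elim_nhds_subcover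
      (fun p => ball p (1/2)) (fun p _ => ball_mem_nhds p (by norm_num))
  have hsub : sphere (0 : EuclideanSpace ℝ (Fin (k+1))) 1
      ⊆ ⋃ p ∈ t, sphere (0 : EuclideanSpace ℝ (Fin (k+1))) 1 ∩ closedBall p (1/2) := by
    intro x hx
    obtain ⟨p, hpt, hpx⟩ := mem_iUnion₂.1 (hcov hx)
    exact mem_iUnion₂.2 ⟨p, hpt, hx, ball_subset_closedBall hpx⟩
  refine lt_of_le_of_lt (measure_mono hsub) (lt_of_le_of_lt (measure_biUnion_finset_le t _) ?_)
  refine ENNReal.sum_lt_top.2 fun p hpt => ?_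
  have := aux_B1 k p (by simpa using hts p hpt)
  simpa using this

end AuxGMT

section AuxAlg
variable {n : ℕ}

private lemma aux_hsymm (f : Matrix (Fin n) (Fin n) ℝ) (hf : f.IsSymm) (u v : Fin n → ℝ) :
    f.mulVec u ⬝ᵥ v = f.mulVec v ⬝ᵥ u := by
  simp only [Matrix.mulVec, dotProduct, Finset.sum_mul]
  rw [Finset.sum_comm]
  refine Finset.sum_congr rfl fun i _ => Finset.sum_congr rfl fun j _ => ?_
  have h := congrFun (congrFun hf j) i
  simp only [Matrix.transpose_apply] at h
  rw [← h]; ring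

private lemma aux_key_smul (f : Matrix (Fin n) (Fin n) ℝ) (v : EuclideanSpace ℝ (Fin n)) (t : ℝ) :
    f.mulVec ((t • v : EuclideanSpace ℝ (Fin n)))
      ⬝ᵥ ((t • v : EuclideanSpace ℝ (Fin n)) : Fin n → ℝ)
      = t^2 * (f.mulVec v ⬝ᵥ (v : Fin n → ℝ)) := by
  show f.mulVec (t • (v : Fin n → ℝ)) ⬝ᵥ (t • (v : Fin n → ℝ)) = _
  rw [Matrix.mulVec_smul, smul_dotProduct, dotProduct_smul]
  simp [smul_eq_mul]; ring

private lemma aux_key_add (f : Matrix (Fin n) (Fin n) ℝ) (v w : EuclideanSpace ℝ (Fin n)) :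
    f.mulVec ((v + w : EuclideanSpace ℝ (Fin n)))
      ⬝ᵥ ((v + w : EuclideanSpace ℝ (Fin n)) : Fin n → ℝ)
      = f.mulVec v ⬝ᵥ (v : Fin n → ℝ) + f.mulVec v ⬝ᵥ (w : Fin n → ℝ)
        + f.mulVec w ⬝ᵥ (v : Fin n → ℝ) + f.mulVec w ⬝ᵥ (w : Fin n → ℝ) := by
  show f.mulVec ((v : Fin n → ℝ) + (w : Fin n → ℝ)) ⬝ᵥ ((v : Fin n → ℝ) + (w : Fin n → ℝ)) = _
  rw [Matrix.mulVec_add, add_dotProduct, dotProduct_add, dotProduct_add]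
  ring

private lemma aux_algebra_step (ξ : EuclideanSpace ℝ (Fin n)) (hξ : ξ ≠ 0)
    (f : Matrix (Fin n) (Fin n) ℝ) (hf : f.IsSymm) (α : EuclideanSpace ℝ (Fin n))
    (hP : ∀ ω : EuclideanSpace ℝ (Fin n), ‖ω‖ = 1 → ⟪ω, ξ⟫_ℝ = 0 →
      f.mulVec ω ⬝ᵥ (ω : Fin n → ℝ) + ⟪α, ω⟫_ℝ = 0)
    (hfξ : f.mulVec ξ = 0) (hαξ : ⟪α, ξ⟫_ℝ = 0) : f = 0 ∧ α = 0 := by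
  have hξn : ‖ξ‖ ≠ 0 := norm_ne_zero_iff.2 hξ
  have hQA : ∀ v : EuclideanSpace ℝ (Fin n), ⟪v, ξ⟫_ℝ = 0 →
      f.mulVec v ⬝ᵥ (v : Fin n → ℝ) = 0 ∧ ⟪α, v⟫_ℝ = 0 := by
    intro v hv
    rcases eq_or_ne v 0 with rfl | hv0
    · constructor
      · show f.mulVec (0 : Fin n → ℝ) ⬝ᵥ (0 : Fin n → ℝ) = 0
        simp
      · simp
    · set c := ‖v‖⁻¹ with hc
      have hc0 : c ≠ 0 := inv_ne_zero (norm_ne_zero_iff.2 hv0)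
      have hinner : ∀ t : ℝ, ⟪(t • v : EuclideanSpace ℝ (Fin n)), ξ⟫_ℝ = 0 := by
        intro t; rw [real_inner_smul_left, hv, mul_zero]
      have hnorm1 : ‖(c • v : EuclideanSpace ℝ (Fin n))‖ = 1 := norm_smul_inv_norm hv0
      have hnorm2 : ‖((-c) • v : EuclideanSpace ℝ (Fin n))‖ = 1 := by
        rw [show (-c) • v = -(c • v) by rw [neg_smul], norm_neg]; exact hnorm1
      have h1 := hP _ hnorm1 (hinner c)
      have h2 := hP _ hnorm2 (hinner (-c))
      rw [aux_key_smul, real_inner_smul_right] at h1 h2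
      set Q := f.mulVec v ⬝ᵥ (v : Fin n → ℝ)
      set A := ⟪α, v⟫_ℝ
      have hQ : Q = 0 := by
        have hc2 : c^2 ≠ 0 := pow_ne_zero 2 hc0
        have : c^2 * Q = 0 := by nlinarith [h1, h2]
        exact (mul_eq_zero.1 this).resolve_left hc2
      have hA : A = 0 := by
        have : c * A = 0 := by nlinarith [h1, h2]
        exact (mul_eq_zero.1 this).resolve_left hc0
      exact ⟨hQ, hA⟩
  have hdec : ∀ x : EuclideanSpace ℝ (Fin n),
      ⟪x - (⟪x, ξ⟫_ℝ / ‖ξ‖^2) • ξ, ξ⟫_ℝ = 0 := by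
    intro x
    rw [inner_sub_left, real_inner_smul_left, real_inner_self_eq_norm_sq]
    field_simp
    ring
  have hα : α = 0 := by
    rw [← inner_self_eq_zero (𝕜 := ℝ) (x := α)]
    have hw := (hQA _ (hdec α)).2
    rw [inner_sub_right, real_inner_smul_right, hαξ, mul_zero, sub_zero] at hw
    exact hw
  have hB : ∀ v w : EuclideanSpace ℝ (Fin n), ⟪v, ξ⟫_ℝ = 0 → ⟪w, ξ⟫_ℝ = 0 →
      f.mulVec v ⬝ᵥ (w : Fin n → ℝ) = 0 := by
    intro v w hv hw
    have hvw : ⟪(v + w : EuclideanSpace ℝ (Fin n)), ξ⟫_ℝ = 0 := by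
      rw [inner_add_left, hv, hw, add_zero]
    have h := (hQA _ hvw).1
    rw [aux_key_add] at h
    rw [(hQA _ hv).1, (hQA _ hw).1] at h
    have hsy := aux_hsymm f hf (v : Fin n → ℝ) (w : Fin n → ℝ)
    linarith
  have hBfull : ∀ u v : EuclideanSpace ℝ (Fin n),
      f.mulVec u ⬝ᵥ (v : Fin n → ℝ) = 0 := by
    intro u v
    set cu := ⟪u, ξ⟫_ℝ / ‖ξ‖^2
    set cv := ⟪v, ξ⟫_ℝ / ‖ξ‖^2
    set u' := u - cu • ξ with hu'
    set v' := v - cv • ξ with hv'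
    have hu'ξ : ⟪u', ξ⟫_ℝ = 0 := hdec u
    have hv'ξ : ⟪v', ξ⟫_ℝ = 0 := hdec v
    have hu'' : u = u' + cu • ξ := by rw [hu']; abel
    have hv'' : v = v' + cv • ξ := by rw [hv']; abel
    rw [hu'', hv'']
    have expand : f.mulVec ((u' + cu • ξ : EuclideanSpace ℝ (Fin n)))
        ⬝ᵥ ((v' + cv • ξ : EuclideanSpace ℝ (Fin n)) : Fin n → ℝ)
        = f.mulVec u' ⬝ᵥ (v' : Fin n → ℝ)
          + cv * (f.mulVec u' ⬝ᵥ (ξ : Fin n → ℝ))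
          + cu * (f.mulVec ξ ⬝ᵥ (v' : Fin n → ℝ))
          + cu * (cv * (f.mulVec ξ ⬝ᵥ (ξ : Fin n → ℝ))) := by
      show f.mulVec ((u' : Fin n → ℝ) + cu • (ξ : Fin n → ℝ))
          ⬝ᵥ ((v' : Fin n → ℝ) + cv • (ξ : Fin n → ℝ)) = _
      rw [Matrix.mulVec_add, Matrix.mulVec_smul, add_dotProduct,
        smul_dotProduct, dotProduct_add, dotProduct_add,
        dotProduct_smul, dotProduct_smul]
      simp [smul_eq_mul]; ring
    rw [expand, hB u' v' hu'ξ hv'ξ, hfξ]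
    have h1 : f.mulVec u' ⬝ᵥ (ξ : Fin n → ℝ) = 0 := by
      rw [aux_hsymm f hf, hfξ, zero_dotProduct]
    rw [h1]
    simp [zero_dotProduct]
  refine ⟨?_, hα⟩
  ext i j
  have h0 := hBfull ((WithLp.equiv 2 (Fin n → ℝ)).symm (Pi.single j 1))
    ((WithLp.equiv 2 (Fin n → ℝ)).symm (Pi.single i 1))
  have h2 : f.mulVec (Pi.single j 1) ⬝ᵥ (Pi.single i 1) = 0 := h0
  simpa [Matrix.mulVec_single, dotProduct_single] using h2

end AuxAlg

theorem stmt_11 (n : ℕ) (hn : 2 ≤ n)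
    (ξ : EuclideanSpace ℝ (Fin n)) (hξ : ξ ≠ 0)
    (W : EuclideanSpace ℝ (Fin n) → ℝ) (hWcont : Continuous W) (hWpos : ∀ ω, 0 < W ω)
    (f : Matrix (Fin n) (Fin n) ℝ) (hf : f.IsSymm) (α : EuclideanSpace ℝ (Fin n))
    (hint : ∫ ω in {ω : EuclideanSpace ℝ (Fin n) | ‖ω‖ = 1 ∧ ⟪ω, ξ⟫_ℝ = 0},
        (f.mulVec ω ⬝ᵥ (ω : Fin n → ℝ) + ⟪α, ω⟫_ℝ) ^ 2 * W ω
        ∂(MeasureTheory.Measure.hausdorffMeasure ((n : ℝ) - 2)) = 0)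
    (hfξ : f.mulVec ξ = 0) (hαξ : ⟪α, ξ⟫_ℝ = 0) :
    f = 0 ∧ α = 0 := by
  classical
  set k := n - 2 with hk
  have hd : ((n : ℝ) - 2) = ((k : ℕ) : ℝ) := by
    have : (n : ℝ) = ((k + 2 : ℕ) : ℝ) := by exact_mod_cast congrArg (Nat.cast (R := ℝ)) (by omega)
    push_cast at this ⊢
    linarith
  rw [hd] at hint
  set μ : Measure (EuclideanSpace ℝ (Fin n)) := Measure.hausdorffMeasure ((k:ℕ):ℝ) with hμ
  set E : Set (EuclideanSpace ℝ (Fin n)) := {ω | ‖ω‖ = 1 ∧ ⟪ω, ξ⟫_ℝ = 0} with hEdef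
  set g : EuclideanSpace ℝ (Fin n) → ℝ :=
    fun ω => (f.mulVec ω ⬝ᵥ (ω : Fin n → ℝ) + ⟪α, ω⟫_ℝ) ^ 2 * W ω with hgdef
  -- continuity of g
  have hPcont : Continuous fun ω : EuclideanSpace ℝ (Fin n) =>
      f.mulVec ω ⬝ᵥ (ω : Fin n → ℝ) + ⟪α, ω⟫_ℝ := by
    refine Continuous.add ?_ (Continuous.inner continuous_const continuous_id)
    simp only [Matrix.mulVec, dotProduct]
    exact continuous_finset_sum _ fun i _ =>
      (continuous_finset_sum _ fun j _ =>
        (continuous_const.mul (EuclideanSpace.proj j).continuous)).mul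
        (EuclideanSpace.proj i).continuous
  have hgcont : Continuous g := (hPcont.pow 2).mul hWcont
  have hgnn : ∀ ω, 0 ≤ g ω := fun ω => mul_nonneg (sq_nonneg _) (hWpos ω).le
  -- E is closed, compact, measurable
  have hEclosed : IsClosed E := by
    have h1 : IsClosed {ω : EuclideanSpace ℝ (Fin n) | ‖ω‖ = 1} :=
      isClosed_singleton.preimage continuous_norm
    have h2 : IsClosed {ω : EuclideanSpace ℝ (Fin n) | ⟪ω, ξ⟫_ℝ = 0} :=
      isClosed_singleton.preimage (Continuous.inner continuous_id continuous_const)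
    exact h1.inter h2
  have hEmeas : MeasurableSet E := hEclosed.measurableSet
  have hEcompact : IsCompact E := by
    have : E ⊆ Metric.closedBall 0 1 := by
      rintro x ⟨hx1, -⟩
      rw [Metric.mem_closedBall, dist_zero_right, hx1]
    exact (isCompact_closedBall (0 : EuclideanSpace ℝ (Fin n)) 1).of_isClosed_subset hEclosed this
  -- the isometric parametrization of E
  haveI : Fact (Module.finrank ℝ (EuclideanSpace ℝ (Fin n)) = (k + 1) + 1) :=
    ⟨by simp only [finrank_euclideanSpace_fin]; omega⟩
  set b := OrthonormalBasis.fromOrthogonalSpanSingleton (𝕜 := ℝ) (k + 1) hξ with hb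
  set ι : EuclideanSpace ℝ (Fin (k + 1)) → EuclideanSpace ℝ (Fin n) :=
    fun q => ((b.repr.symm q : (ℝ ∙ ξ)ᗮ) : EuclideanSpace ℝ (Fin n)) with hι
  have hιiso : Isometry ι := ((ℝ ∙ ξ)ᗮ.subtypeₗᵢ.comp b.repr.symm.toLinearIsometry).isometry
  have hE : E = ι '' Metric.sphere 0 1 := by
    ext x
    constructor
    · rintro ⟨hx1, hx2⟩
      have hxV : x ∈ (ℝ ∙ ξ)ᗮ := by
        rw [Submodule.mem_orthogonal_singleton_iff_inner_right, real_inner_comm]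
        exact hx2
      refine ⟨b.repr ⟨x, hxV⟩, ?_, ?_⟩
      · rw [Metric.mem_sphere, dist_zero_right, b.repr.norm_map]
        simpa using hx1
      · simp [ι]
    · rintro ⟨q, hq, rfl⟩
      rw [Metric.mem_sphere, dist_zero_right] at hq
      constructor
      · rw [show ‖ι q‖ = ‖b.repr.symm q‖ from rfl, b.repr.symm.norm_map, hq]
      · have hmem : (ι q : EuclideanSpace ℝ (Fin n)) ∈ (ℝ ∙ ξ)ᗮ := (b.repr.symm q).2
        rw [Submodule.mem_orthogonal_singleton_iff_inner_right] at hmem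
        rw [real_inner_comm]
        exact hmem
  -- finiteness and positivity of the measure on E
  have hd0 : (0:ℝ) ≤ ((k:ℕ):ℝ) := Nat.cast_nonneg k
  have hEfin : μ E ≠ ⊤ := by
    rw [hμ, hE, hιiso.hausdorffMeasure_image (Or.inl hd0)]
    exact (aux_C k).ne
  have hEpos : ∀ p ∈ E, ∀ ε : ℝ, 0 < ε → 0 < μ (E ∩ Metric.ball p ε) := by
    intro p hp ε hε
    rw [hE] at hp
    obtain ⟨q, hq, rfl⟩ := hp
    rw [Metric.mem_sphere, dist_zero_right] at hq
    have hsub : ι '' (Metric.sphere 0 1 ∩ Metric.ball q ε) ⊆ E ∩ Metric.ball (ι q) ε := by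
      rintro _ ⟨y, ⟨hy1, hy2⟩, rfl⟩
      refine ⟨by rw [hE]; exact Set.mem_image_of_mem ι hy1, ?_⟩
      rw [Metric.mem_ball, hιiso.dist_eq]
      exact hy2
    calc (0:ENNReal) < Measure.hausdorffMeasure ((k:ℕ):ℝ)
          (Metric.sphere (0 : EuclideanSpace ℝ (Fin (k+1))) 1 ∩ Metric.ball q ε) :=
        aux_B2 k q hq ε hε
      _ = μ (ι '' (Metric.sphere 0 1 ∩ Metric.ball q ε)) := by
          rw [hμ, hιiso.hausdorffMeasure_image (Or.inl hd0)]
      _ ≤ μ (E ∩ Metric.ball (ι q) ε) := measure_mono hsub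
  -- integrability
  obtain ⟨M, hM⟩ := hEcompact.exists_bound_of_continuousOn hgcont.continuousOn
  have hgint : IntegrableOn g E μ := by
    refine Measure.integrableOn_of_bounded (M := M) hEfin hgcont.aestronglyMeasurable ?_
    exact (ae_restrict_iff' hEmeas).2 (ae_of_all _ hM)
  -- a.e. vanishing
  have hae : ∀ᵐ x ∂μ.restrict E, g x = 0 := by
    have := (integral_eq_zero_iff_of_nonneg (fun ω => hgnn ω) hgint).1 hint
    filter_upwards [this] with x hx using hx
  have hnull : μ ({x | g x ≠ 0} ∩ E) = 0 := by
    have hopen : IsOpen {x | g x ≠ 0} := isOpen_compl_singleton.preimage hgcont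
    have h0 : μ.restrict E {x | g x ≠ 0} = 0 := by
      have := hae
      rw [MeasureTheory.ae_iff] at this
      simpa using this
    rw [← Measure.restrict_apply hopen.measurableSet]
    exact h0
  -- pointwise vanishing
  have hgzero : ∀ p ∈ E, g p = 0 := by
    intro p hp
    by_contra hne
    have hopen : IsOpen {x | g x ≠ 0} := isOpen_compl_singleton.preimage hgcont
    obtain ⟨ε, hε, hball⟩ := Metric.isOpen_iff.1 hopen p hne
    have hsub : E ∩ Metric.ball p ε ⊆ {x | g x ≠ 0} ∩ E := by
      rintro x ⟨hx1, hx2⟩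
      exact ⟨hball hx2, hx1⟩
    have := lt_of_lt_of_le (hEpos p hp ε hε) (measure_mono hsub)
    rw [hnull] at this
    exact absurd this (lt_irrefl 0)
  -- conclude pointwise vanishing of the symbol
  have hP : ∀ ω : EuclideanSpace ℝ (Fin n), ‖ω‖ = 1 → ⟪ω, ξ⟫_ℝ = 0 →
      f.mulVec ω ⬝ᵥ (ω : Fin n → ℝ) + ⟪α, ω⟫_ℝ = 0 := by
    intro ω h1 h2
    have hg0 : g ω = 0 := hgzero ω ⟨h1, h2⟩
    have hW : W ω ≠ 0 := (hWpos ω).ne'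
    have hsq : (f.mulVec ω ⬝ᵥ (ω : Fin n → ℝ) + ⟪α, ω⟫_ℝ) ^ 2 = 0 :=
      (mul_eq_zero.1 hg0).resolve_right hW
    exact (pow_eq_zero_iff (by norm_num : (2:ℕ) ≠ 0)).1 hsq
  exact aux_algebra_step ξ hξ f hf α hP hfξ hαξ
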